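/- arXiv:2307.16501 — 2 statements merged into one kernel-verified Lean document; each statement's English description precedes it below -/
import Mathlib

section
/- Let S be a simplicial affine semigroup in ℕ^3 minimally generated by A ⊃ E = {a_1,a_2,a_3}, with toric ideal I_A. Suppose S is not Cohen-Macaulay-like in the sense that both x_j and x_k are zero-divisors on k[x]/(I_A + ⟨x_i⟩), where {i,j,k} = {1,2,3}, and suppose Ap(S, a_i) has no ⪯_S-maximal element. Then x_j - x_k is a nonzero-divisor on k[x]/(I_A + ⟨x_i⟩). -/
open MvPolynomial

noncomputable section

/-- The toric ideal of the family `a : Fin e → ℕ^d`. -/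
def toricIdeal (k : Type*) [Field k] {e d : ℕ} (a : Fin e → (Fin d → ℕ)) :
    Ideal (MvPolynomial (Fin e) k) :=
  RingHom.ker (MvPolynomial.aeval
    (fun i => AddMonoidAlgebra.single (a i) (1 : k)) :
      MvPolynomial (Fin e) k →ₐ[k] AddMonoidAlgebra k (Fin d → ℕ)).toRingHom

/-- Membership in `Ap(S, x)`. -/
def memApery {d : ℕ} (S : AddSubmonoid (Fin d → ℕ)) (x b : Fin d → ℕ) : Prop :=
  b ∈ S ∧ ¬ ∃ s ∈ S, b = x + s

/-- The semigroup order `u ⪯_S v`. -/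
def semigroupLE {d : ℕ} (S : AddSubmonoid (Fin d → ℕ)) (u v : Fin d → ℕ) : Prop :=
  ∃ s ∈ S, v = u + s

section CoreAux


open AddMonoidAlgebra

variable {k : Type*} [Field k]

local notation "M3" => (Fin 3 → ℕ)
local notation "AMA" => AddMonoidAlgebra k (Fin 3 → ℕ)

lemma core_comb (S : AddSubmonoid M3)
    (ApE : Set M3) (hApE : ApE.Finite)
    (Ai Aj Ak : M3) (hiS : Ai ∈ S) (hjS : Aj ∈ S) (hkS : Ak ∈ S)
    (hdec : ∀ s ∈ S, ∃ c ∈ ApE, c ∈ S ∧ ∃ α β γ : ℕ,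
      s = c + α • Ai + β • Aj + γ • Ak)
    (lam : M3 → ℕ) (hlam : ∀ x y, lam (x + y) = lam x + lam y)
    (hpos : ∀ s : M3, s ≠ 0 → 0 < lam s)
    (hjk2 : lam Ak < lam Aj)
    (hmax : ¬ ∃ m, memApery S Ai m ∧ ∀ x, memApery S Ai x → semigroupLE S m x → x = m)
    (f : AddMonoidAlgebra k M3) (hfS : ∀ w, f.coeff w ≠ 0 → w ∈ S)
    (hprod : ∀ w : M3, ((single Aj 1 - single Ak 1) * f : AMA).coeff w ≠ 0 →
      ∃ s ∈ S, w = Ai + s) :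
    ∀ w, f.coeff w ≠ 0 → ∃ s ∈ S, w = Ai + s := by
  classical
  set P : M3 → Prop := fun w => ∃ s ∈ S, w = Ai + s with hPdef
  intro w0 hw0
  by_contra hwP
  have hPup : ∀ w t, P w → t ∈ S → P (w + t) := by
    rintro w t ⟨s, hs, rfl⟩ ht
    exact ⟨s + t, S.add_mem hs ht, by rw [add_assoc]⟩
  have hsingle_apply : ∀ (u x : M3) (g : AMA), ((single u 1 * g : AMA)).coeff (u + x) = g.coeff x := by
    intro u x g
    rw [coeff_single_mul_add, one_mul]
  have hsupp : ∀ (u : M3) (g : AMA) (w : M3),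
      ((single u 1 * g : AMA)).coeff w ≠ 0 → ∃ x, g.coeff x ≠ 0 ∧ w = u + x := by
    intro u g w hw
    have hmem := AddMonoidAlgebra.support_coeff_mul_subset (single u (1:k)) g
      (Finsupp.mem_support_iff.mpr hw)
    rw [Finset.mem_add] at hmem
    obtain ⟨y, hy, z, hz, hyz⟩ := hmem
    have hy' : y = u := by
      have := Finsupp.support_single_subset hy
      simpa using this
    exact ⟨z, Finsupp.mem_support_iff.mp hz, by rw [← hyz, hy']⟩
  -- L-STEP
  have hstep : ∀ (u v : M3), v ∈ S →
      (∀ w, (((single u 1 - single v 1) * f : AMA)).coeff w ≠ 0 → P w) →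
      ∀ s, s ∈ S → ∀ b, f.coeff b ≠ 0 → ¬ P (u + (s + b)) →
      ∃ x, f.coeff x ≠ 0 ∧ v + (s + x) = u + (s + b) := by
    intro u v hv hP0 s hs b hb hnP
    have hg : ∀ w, (((single u 1 - single v 1) * (single s 1 * f) : AMA)).coeff w ≠ 0 → P w := by
      intro w hw
      have hw' : ((single s 1 * ((single u 1 - single v 1) * f) : AMA)).coeff w ≠ 0 := by
        rwa [mul_left_comm] at hw
      obtain ⟨x, hx, rfl⟩ := hsupp s _ w hw'
      obtain ⟨r, hr, rfl⟩ := hP0 x hx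
      exact ⟨s + r, S.add_mem hs hr, by rw [← add_assoc, add_comm s Ai, add_assoc]⟩
    have h0 : (((single u 1 - single v 1) * (single s 1 * f) : AMA)).coeff (u + (s + b)) = 0 := by
      by_contra h
      exact hnP (hg _ h)
    rw [sub_mul, AddMonoidAlgebra.coeff_sub, Finsupp.sub_apply] at h0
    have h1 : ((single u 1 * (single s 1 * f) : AMA)).coeff (u + (s + b)) = f.coeff b := by
      rw [← mul_assoc, single_mul_single, one_mul, ← add_assoc]
      exact hsingle_apply (u + s) b f
    have h2 : ((single v 1 * (single s 1 * f) : AMA)).coeff (u + (s + b)) ≠ 0 := by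
      rw [h1] at h0
      intro h
      rw [h] at h0
      exact hb (by simpa using h0)
    rw [← mul_assoc, single_mul_single, one_mul] at h2
    obtain ⟨x, hx, hxe⟩ := hsupp (v + s) f _ h2
    exact ⟨x, hx, by rw [← add_assoc]; exact hxe.symm⟩
  -- swapped hypothesis for hprod
  have hprod' : ∀ w : M3, (((single Ak 1 - single Aj 1) * f : AMA)).coeff w ≠ 0 → P w := by
    intro w hw
    apply hprod w
    intro h
    apply hw
    have : ((single Ak 1 - single Aj 1) * f : AMA) = -((single Aj 1 - single Ak 1) * f : AMA) := by
      rw [← neg_sub, neg_mul]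
    rw [this, AddMonoidAlgebra.coeff_neg, Finsupp.neg_apply, h, neg_zero]
  -- hswap : from Gne (s + Ak) to Gne (s + Aj)
  have hswap : ∀ s, s ∈ S → (∃ b, f.coeff b ≠ 0 ∧ ¬ P ((s + Ak) + b)) →
      ∃ x, f.coeff x ≠ 0 ∧ ¬ P ((s + Aj) + x) := by
    rintro s hs ⟨b, hb, hnP⟩
    have hnP' : ¬ P (Ak + (s + b)) := by
      rwa [show Ak + (s + b) = (s + Ak) + b by abel]
    obtain ⟨x, hx, hxe⟩ := hstep Ak Aj hjS hprod' s hs b hb hnP'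
    refine ⟨x, hx, ?_⟩
    rw [show (s + Aj) + x = Aj + (s + x) by abel, hxe]
    exact hnP'
  -- chain lemma
  have hchain : ∀ s, s ∈ S → (∃ b, f.coeff b ≠ 0 ∧ ¬ P (s + b)) →
      ∃ b, f.coeff b ≠ 0 ∧ ¬ P (s + b) ∧ P ((s + b) + Aj) := by
    rintro s hs ⟨b1, hb1, hnP1⟩
    set GF := f.coeff.support.filter (fun b => ¬ P (s + b)) with hGF
    have hne : GF.Nonempty :=
      ⟨b1, Finset.mem_filter.mpr ⟨Finsupp.mem_support_iff.mpr hb1, hnP1⟩⟩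
    obtain ⟨b, hbGF, hmaxb⟩ := GF.exists_max_image lam hne
    have hbf : f.coeff b ≠ 0 := Finsupp.mem_support_iff.mp (Finset.mem_filter.mp hbGF).1
    have hbP : ¬ P (s + b) := (Finset.mem_filter.mp hbGF).2
    refine ⟨b, hbf, hbP, ?_⟩
    by_contra hnPj
    have hnPj' : ¬ P (Aj + (s + b)) := by
      rwa [show Aj + (s + b) = (s + b) + Aj by abel]
    obtain ⟨x, hx, hxe⟩ := hstep Aj Ak hkS hprod s hs b hbf hnPj'
    -- hxe : Ak + (s + x) = Aj + (s + b)
    have hxP : ¬ P (s + x) := by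
      intro h
      apply hnPj'
      rw [← hxe, show Ak + (s + x) = (s + x) + Ak by abel]
      exact hPup _ _ h hkS
    have hxGF : x ∈ GF := Finset.mem_filter.mpr ⟨Finsupp.mem_support_iff.mpr hx, hxP⟩
    have hle := hmaxb x hxGF
    have : lam Ak + (lam s + lam x) = lam Aj + (lam s + lam b) := by
      rw [← hlam, ← hlam, ← hlam, ← hlam, hxe]
    omega
  -- case analysis
  by_cases hc : ∀ s, s ∈ S → (∃ b, f.coeff b ≠ 0 ∧ ¬ P (s + b)) →
      ∃ b, f.coeff b ≠ 0 ∧ ¬ P ((s + Aj) + b)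
  · -- Case 2 : pigeonhole contradiction
    have hGn : ∀ β : ℕ, ∃ b, f.coeff b ≠ 0 ∧ ¬ P (β • Aj + b) := by
      intro β
      induction β with
      | zero => exact ⟨w0, hw0, by rw [zero_nsmul, zero_add]; exact hwP⟩
      | succ n ih =>
        obtain ⟨b, hb, hnb⟩ := hc (n • Aj) (AddSubmonoid.nsmul_mem S hjS n) ih
        exact ⟨b, hb, by rw [succ_nsmul]; exact hnb⟩
    have hGn2 : ∀ β : ℕ, ∃ b, f.coeff b ≠ 0 ∧ ¬ P (β • Aj + b) ∧ P ((β • Aj + b) + Aj) :=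
      fun β => hchain _ (AddSubmonoid.nsmul_mem S hjS β) (hGn β)
    choose bb hbb1 hbb2 hbb3 using hGn2
    have hpig : ∃ m n : ℕ, m ≠ n ∧ bb m = bb n := by
      obtain ⟨m, n, hmn, he⟩ := Finite.exists_ne_map_eq_of_infinite
        (fun β : ℕ => (⟨bb β, Finsupp.mem_support_iff.mpr (hbb1 β)⟩ : {x // x ∈ f.coeff.support}))
      exact ⟨m, n, hmn, congrArg Subtype.val he⟩
    obtain ⟨m, n, hmn, he⟩ := hpig
    have key : ∀ m d : ℕ, bb m = bb (m + 1 + d) → False := by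
      intro m d he
      apply hbb2 (m + 1 + d)
      rw [← he]
      have harr : (m + 1 + d) • Aj + bb m = ((m • Aj + bb m) + Aj) + d • Aj := by
        rw [add_nsmul, add_nsmul, one_nsmul]; abel
      rw [harr]
      exact hPup _ _ (hbb3 m) (AddSubmonoid.nsmul_mem S hjS d)
    rcases Nat.lt_or_ge m n with h | h
    · refine key m (n - m - 1) ?_
      have harg : n = m + 1 + (n - m - 1) := by omega
      rw [← harg]
      exact he
    · refine key n (m - n - 1) ?_
      have harg : m = n + 1 + (m - n - 1) := by omega
      rw [← harg]
      exact he.symm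
  · -- Case 1 : build a maximal element of the Apery set
    push_neg at hc
    obtain ⟨s, hs, ⟨b, hbf, hbP⟩, hjdead⟩ := hc
    have hkdead : ∀ b', f.coeff b' ≠ 0 → P ((s + Ak) + b') := by
      intro b' hb'
      by_contra hnb'
      obtain ⟨x, hx, hxP⟩ := hswap s hs ⟨b', hb', hnb'⟩
      exact hxP (hjdead x hx)
    set bs := s + b with hbs
    have hbsS : bs ∈ S := S.add_mem hs (hfS b hbf)
    have hbsP : ¬ P bs := hbP
    have hPj : P (bs + Aj) := by
      have h := hjdead b hbf
      rwa [show (s + Aj) + b = bs + Aj by rw [hbs]; abel] at h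
    have hPk : P (bs + Ak) := by
      have h := hkdead b hbf
      rwa [show (s + Ak) + b = bs + Ak by rw [hbs]; abel] at h
    have hPi : P (bs + Ai) := by
      rw [add_comm]
      exact ⟨bs, hbsS, rfl⟩
    set T : Set M3 := {r | r ∈ S ∧ ¬ P (bs + r)} with hT
    have hT0 : (0 : M3) ∈ T := ⟨S.zero_mem, by rwa [add_zero]⟩
    have hTsub : T ⊆ ApE := by
      rintro r ⟨hrS, hrP⟩
      obtain ⟨c, hcA, hcS, α, β, γ, hre⟩ := hdec r hrS
      have hmem3 : ∀ α' β' γ' : ℕ, c + α' • Ai + β' • Aj + γ' • Ak ∈ S := fun α' β' γ' =>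
        S.add_mem (S.add_mem (S.add_mem hcS (AddSubmonoid.nsmul_mem S hiS α'))
          (AddSubmonoid.nsmul_mem S hjS β')) (AddSubmonoid.nsmul_mem S hkS γ')
      have hα : α = 0 := by
        by_contra h
        apply hrP
        obtain ⟨α', rfl⟩ : ∃ α', α = α' + 1 := ⟨α - 1, by omega⟩
        rw [show bs + r = (bs + Ai) + (c + α' • Ai + β • Aj + γ • Ak) by
          rw [hre, succ_nsmul]; abel]
        exact hPup _ _ hPi (hmem3 α' β γ)
      have hβ : β = 0 := by
        by_contra h
        apply hrP
        obtain ⟨β', rfl⟩ : ∃ β', β = β' + 1 := ⟨β - 1, by omega⟩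
        rw [show bs + r = (bs + Aj) + (c + α • Ai + β' • Aj + γ • Ak) by
          rw [hre, succ_nsmul]; abel]
        exact hPup _ _ hPj (hmem3 α β' γ)
      have hγ : γ = 0 := by
        by_contra h
        apply hrP
        obtain ⟨γ', rfl⟩ : ∃ γ', γ = γ' + 1 := ⟨γ - 1, by omega⟩
        rw [show bs + r = (bs + Ak) + (c + α • Ai + β • Aj + γ' • Ak) by
          rw [hre, succ_nsmul]; abel]
        exact hPup _ _ hPk (hmem3 α β γ')
      have : r = c := by rw [hre, hα, hβ, hγ]; simp
      rwa [this]
    have hTfin : T.Finite := hApE.subset hTsub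
    obtain ⟨m0, hm0T, hm0max⟩ := Set.Finite.exists_maximalFor lam T hTfin ⟨0, hT0⟩
    apply hmax
    refine ⟨bs + m0, ⟨S.add_mem hbsS hm0T.1, hm0T.2⟩, ?_⟩
    rintro x ⟨hxS, hxP⟩ ⟨r, hrS, rfl⟩
    have hmemT : m0 + r ∈ T := by
      refine ⟨S.add_mem hm0T.1 hrS, ?_⟩
      rwa [← add_assoc]
    have hle := hm0max hmemT (by rw [hlam]; omega)
    rw [hlam] at hle
    have hr0 : r = 0 := by
      by_contra h
      have := hpos r h
      omega
    rw [hr0, add_zero]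

end CoreAux

section GlueAux


open AddMonoidAlgebra

variable {k : Type*} [Field k] {e : ℕ} (a : Fin e → (Fin 3 → ℕ))

lemma aux_suppS (S : AddSubmonoid (Fin 3 → ℕ)) (hS : S = AddSubmonoid.closure (Set.range a))
    (p : MvPolynomial (Fin e) k) :
    ∀ w, (MvPolynomial.aeval (fun l => AddMonoidAlgebra.single (a l) (1 : k)) p).coeff w ≠ 0 → w ∈ S := by
  classical
  have haS : ∀ l : Fin e, a l ∈ S := by
    intro l; rw [hS]; exact AddSubmonoid.subset_closure ⟨l, rfl⟩
  induction p using MvPolynomial.induction_on with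
  | C c =>
    intro w hw
    rw [show (MvPolynomial.aeval (fun l => AddMonoidAlgebra.single (a l) (1 : k))) (C c)
        = AddMonoidAlgebra.single (0 : Fin 3 → ℕ) c from by rw [aeval_C]; rfl] at hw
    have hw0 : w = 0 := by
      by_contra h
      exact hw (Finsupp.single_eq_of_ne' (Ne.symm h))
    rw [hw0]; exact S.zero_mem
  | add p q hp hq =>
    intro w hw
    rw [map_add] at hw
    by_cases h1 : (MvPolynomial.aeval (fun l => AddMonoidAlgebra.single (a l) (1 : k)) p).coeff w = 0
    · apply hq w
      intro h2
      apply hw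
      rw [AddMonoidAlgebra.coeff_add, Finsupp.add_apply, h1, h2, add_zero]
    · exact hp w h1
  | mul_X p l hp =>
    intro w hw
    rw [map_mul, aeval_X] at hw
    have hmem := AddMonoidAlgebra.support_coeff_mul_subset
      (MvPolynomial.aeval (fun l => AddMonoidAlgebra.single (a l) (1 : k)) p)
      (AddMonoidAlgebra.single (a l) (1 : k)) (Finsupp.mem_support_iff.mpr hw)
    rw [Finset.mem_add] at hmem
    obtain ⟨y, hy, z, hz, hyz⟩ := hmem
    have hz' : z = a l := by simpa using Finsupp.support_single_subset hz
    rw [← hyz, hz']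
    exact S.add_mem (hp y (Finsupp.mem_support_iff.mp hy)) (haS l)

lemma aux_rep (S : AddSubmonoid (Fin 3 → ℕ)) (hS : S = AddSubmonoid.closure (Set.range a)) :
    ∀ s ∈ S, ∃ p : MvPolynomial (Fin e) k,
      (MvPolynomial.aeval (fun l => AddMonoidAlgebra.single (a l) (1 : k))) p
        = AddMonoidAlgebra.single s 1 := by
  intro s hs
  rw [hS] at hs
  induction hs using AddSubmonoid.closure_induction with
  | mem x hx =>
    obtain ⟨l, rfl⟩ := hx
    exact ⟨X l, by rw [aeval_X]⟩
  | zero =>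
    exact ⟨1, by rw [map_one, AddMonoidAlgebra.one_def]⟩
  | add x y hx hy ihx ihy =>
    obtain ⟨p, hp⟩ := ihx
    obtain ⟨q, hq⟩ := ihy
    exact ⟨p * q, by rw [map_mul, hp, hq, AddMonoidAlgebra.single_mul_single, one_mul]⟩

lemma aux_Jmem (S : AddSubmonoid (Fin 3 → ℕ)) (hS : S = AddSubmonoid.closure (Set.range a))
    (i' : Fin e) (J : Ideal (MvPolynomial (Fin e) k))
    (hJ : J = toricIdeal k a ⊔ Ideal.span {X i'}) (p : MvPolynomial (Fin e) k) :
    p ∈ J ↔ ∀ w, (MvPolynomial.aeval (fun l => AddMonoidAlgebra.single (a l) (1 : k)) p).coeff w ≠ 0 →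
      ∃ s ∈ S, w = a i' + s := by
  classical
  constructor
  · intro hp
    rw [hJ] at hp
    obtain ⟨u, hu, v, hv, rfl⟩ := Submodule.mem_sup.mp hp
    have hu0 : (MvPolynomial.aeval (fun l => AddMonoidAlgebra.single (a l) (1 : k))) u = 0 := by
      rw [toricIdeal, RingHom.mem_ker] at hu
      exact hu
    obtain ⟨h, rfl⟩ := Ideal.mem_span_singleton.mp hv
    intro w hw
    rw [map_add, hu0, zero_add, map_mul, aeval_X] at hw
    have hmem := AddMonoidAlgebra.support_coeff_mul_subset
      (AddMonoidAlgebra.single (a i') (1 : k))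
      (MvPolynomial.aeval (fun l => AddMonoidAlgebra.single (a l) (1 : k)) h)
      (Finsupp.mem_support_iff.mpr hw)
    rw [Finset.mem_add] at hmem
    obtain ⟨y, hy, z, hz, hyz⟩ := hmem
    have hy' : y = a i' := by simpa using Finsupp.support_single_subset hy
    refine ⟨z, aux_suppS a S hS h z (Finsupp.mem_support_iff.mp hz), ?_⟩
    rw [← hyz, hy']
  · intro hsupport
    set f : AddMonoidAlgebra k (Fin 3 → ℕ) := (MvPolynomial.aeval (fun l => AddMonoidAlgebra.single (a l) (1 : k))) p with hf
    have hq : ∀ w ∈ f.coeff.support, ∃ q : MvPolynomial (Fin e) k,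
        q ∈ Ideal.span {X i'} ∧
        (MvPolynomial.aeval (fun l => AddMonoidAlgebra.single (a l) (1 : k))) q
          = AddMonoidAlgebra.single w (f.coeff w) := by
      intro w hw
      obtain ⟨s, hsS, hws⟩ := hsupport w (Finsupp.mem_support_iff.mp hw)
      obtain ⟨q0, hq0⟩ := aux_rep (k := k) a S hS s hsS
      refine ⟨C (f.coeff w) * (X i' * q0), ?_, ?_⟩
      · exact Ideal.mul_mem_left _ _ (Ideal.mul_mem_right _ _ (Ideal.subset_span rfl))
      · rw [map_mul, map_mul, hq0, aeval_X, aeval_C]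
        rw [show (algebraMap k (AddMonoidAlgebra k (Fin 3 → ℕ))) (f.coeff w)
            = AddMonoidAlgebra.single 0 (f.coeff w) from rfl]
        rw [AddMonoidAlgebra.single_mul_single, AddMonoidAlgebra.single_mul_single]
        rw [one_mul, mul_one, zero_add, hws]
    choose qf hqf1 hqf2 using hq
    set h := ∑ w ∈ f.coeff.support.attach, qf w.1 w.2 with hh
    have hhJ : h ∈ Ideal.span {X i'} := Ideal.sum_mem _ (fun w _ => hqf1 w.1 w.2)
    have hπh : (MvPolynomial.aeval (fun l => AddMonoidAlgebra.single (a l) (1 : k))) h = f := by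
      rw [hh, map_sum]
      rw [Finset.sum_congr rfl (fun w _ => hqf2 w.1 w.2)]
      rw [Finset.sum_attach (f.coeff.support) (fun w => AddMonoidAlgebra.single w (f.coeff w))]
      exact AddMonoidAlgebra.sum_coeff_single f
    have hpk : p - h ∈ toricIdeal k a := by
      rw [toricIdeal, RingHom.mem_ker]
      show (MvPolynomial.aeval (fun l => AddMonoidAlgebra.single (a l) (1 : k))) (p - h) = 0
      rw [map_sub, hπh, hf, sub_self]
    rw [hJ, show p = (p - h) + h from by ring]
    exact Submodule.add_mem _ (Submodule.mem_sup_left hpk) (Submodule.mem_sup_right hhJ)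

end GlueAux

/-- (`d = 3`) if both `x_j` and `x_k` are zero-divisors on
`k[x]/(I_A + ⟨x_i⟩)` and `Ap(S, a_i)` has no `⪯_S`-maximal element,
then `x_j - x_k` is a nonzero-divisor on `k[x]/(I_A + ⟨x_i⟩)`. -/
theorem xj_sub_xk_nonzerodivisor (k : Type*) [Field k] {e : ℕ} (hde : 3 ≤ e)
    (a : Fin e → (Fin 3 → ℕ))
    (hE : LinearIndependent ℚ (fun t : Fin 3 => (fun s => (a (Fin.castLE hde t) s : ℚ))))
    (S : AddSubmonoid (Fin 3 → ℕ)) (hS : S = AddSubmonoid.closure (Set.range a))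
    (hFin : {x | x ∈ S ∧ ∀ t : Fin 3, ¬ ∃ s ∈ S, x = a (Fin.castLE hde t) + s}.Finite)
    (i j kk : Fin 3) (hperm : ({i, j, kk} : Finset (Fin 3)) = Finset.univ)
    (J : Ideal (MvPolynomial (Fin e) k))
    (hJ : J = toricIdeal k a ⊔ Ideal.span {X (Fin.castLE hde i)})
    (hzdj : ∃ g, g ∉ J ∧ X (Fin.castLE hde j) * g ∈ J)
    (hzdk : ∃ g, g ∉ J ∧ X (Fin.castLE hde kk) * g ∈ J)
    (hmax : ¬ ∃ m, memApery S (a (Fin.castLE hde i)) m ∧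
      ∀ x, memApery S (a (Fin.castLE hde i)) x → semigroupLE S m x → x = m) :
    ∀ g, (X (Fin.castLE hde j) - X (Fin.castLE hde kk)) * g ∈ J → g ∈ J := by
  classical
  intro g hg
  have haS : ∀ l : Fin e, a l ∈ S := by
    intro l; rw [hS]; exact AddSubmonoid.subset_closure ⟨l, rfl⟩
  have hπg := aux_suppS (k := k) a S hS g
  rw [aux_Jmem a S hS (Fin.castLE hde i) J hJ] at hg ⊢
  have hprod0 : ∀ w, (((AddMonoidAlgebra.single (a (Fin.castLE hde j)) 1
      - AddMonoidAlgebra.single (a (Fin.castLE hde kk)) 1) *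
      (MvPolynomial.aeval (fun l => AddMonoidAlgebra.single (a l) (1:k))) g
      : AddMonoidAlgebra k (Fin 3 → ℕ))).coeff w ≠ 0 →
      ∃ s ∈ S, w = a (Fin.castLE hde i) + s := by
    intro w hw
    apply hg w
    rw [map_mul, map_sub, aeval_X, aeval_X]
    exact hw
  have hjkk : j ≠ kk := by
    intro h
    have hcard : ({i, j, kk} : Finset (Fin 3)).card ≤ 2 := by
      subst h
      have h2 : ({i, j, j} : Finset (Fin 3)) = {i, j} := by simp
      rw [h2]
      exact le_trans (Finset.card_insert_le _ _) (by simp)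
    rw [hperm] at hcard
    simp [Finset.card_univ] at hcard
  have hAjk : a (Fin.castLE hde j) ≠ a (Fin.castLE hde kk) := by
    intro h
    apply hjkk
    apply hE.injective
    funext s
    simp only [h]
  have hne0 : ∀ t : Fin 3, a (Fin.castLE hde t) ≠ 0 := by
    intro t h
    apply hE.ne_zero t
    funext s
    rw [h]
    simp
  -- the coordinate-sum functional
  set σ : (Fin 3 → ℕ) → ℕ := fun v => ∑ t, v t with hσdef
  have hσadd : ∀ x y : Fin 3 → ℕ, σ (x + y) = σ x + σ y := by
    intro x y
    simp [hσdef, Finset.sum_add_distrib]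
  have hσpos : ∀ s : Fin 3 → ℕ, s ≠ 0 → 0 < σ s := by
    intro s hs
    obtain ⟨u, hu⟩ : ∃ u, s u ≠ 0 := by
      by_contra h
      push_neg at h
      exact hs (funext h)
    calc 0 < s u := Nat.pos_of_ne_zero hu
      _ ≤ σ s := Finset.single_le_sum (fun t _ => Nat.zero_le _) (Finset.mem_univ u)
  have hσ0 : ∀ s : Fin 3 → ℕ, σ s = 0 → s = 0 := by
    intro s h
    by_contra hs
    exact absurd h (hσpos s hs).ne'
  -- decomposition modulo the Apery set of the extremal rays
  set ApE : Set (Fin 3 → ℕ) :=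
    {x | x ∈ S ∧ ∀ t : Fin 3, ¬ ∃ s ∈ S, x = a (Fin.castLE hde t) + s} with hApEdef
  have hApEfin : ApE.Finite := hFin
  have hdec0 : ∀ N : ℕ, ∀ s ∈ S, σ s ≤ N → ∃ c ∈ ApE, c ∈ S ∧ ∃ α β γ : ℕ,
      s = c + α • a (Fin.castLE hde i) + β • a (Fin.castLE hde j)
        + γ • a (Fin.castLE hde kk) := by
    intro N
    induction N with
    | zero =>
      intro s hs hσs
      have hs0 : s = 0 := hσ0 s (Nat.le_zero.mp hσs)
      subst hs0
      refine ⟨0, ⟨S.zero_mem, ?_⟩, S.zero_mem, 0, 0, 0, by simp⟩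
      rintro t ⟨s', hs', he⟩
      apply hne0 t
      funext u
      have h2 := congrFun he u
      simp only [Pi.add_apply, Pi.zero_apply] at h2 ⊢
      omega
    | succ n ih =>
      intro s hs hσs
      by_cases hap : ∀ t : Fin 3, ¬ ∃ s' ∈ S, s = a (Fin.castLE hde t) + s'
      · exact ⟨s, ⟨hs, hap⟩, hs, 0, 0, 0, by simp⟩
      · push_neg at hap
        obtain ⟨t, s', hs'S, he⟩ := hap
        have hσ' : σ s' ≤ n := by
          have h1 := hσadd (a (Fin.castLE hde t)) s'
          have h2 : 0 < σ (a (Fin.castLE hde t)) := hσpos _ (hne0 t)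
          rw [he, h1] at hσs
          omega
        obtain ⟨c, hcA, hcS, α, β, γ, hre⟩ := ih s' hs'S hσ'
        have ht : t = i ∨ t = j ∨ t = kk := by
          have h3 : t ∈ ({i, j, kk} : Finset (Fin 3)) := by
            rw [hperm]; exact Finset.mem_univ t
          simpa using h3
        rcases ht with rfl | rfl | rfl
        · exact ⟨c, hcA, hcS, α + 1, β, γ, by rw [he, hre, succ_nsmul]; abel⟩
        · exact ⟨c, hcA, hcS, α, β + 1, γ, by rw [he, hre, succ_nsmul]; abel⟩
        · exact ⟨c, hcA, hcS, α, β, γ + 1, by rw [he, hre, succ_nsmul]; abel⟩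
  have hdec : ∀ s ∈ S, ∃ c ∈ ApE, c ∈ S ∧ ∃ α β γ : ℕ,
      s = c + α • a (Fin.castLE hde i) + β • a (Fin.castLE hde j)
        + γ • a (Fin.castLE hde kk) := fun s hs => hdec0 (σ s) s hs le_rfl
  -- the linear functional lam
  obtain ⟨t0, ht0⟩ : ∃ t0, a (Fin.castLE hde j) t0 ≠ a (Fin.castLE hde kk) t0 := by
    by_contra h
    push_neg at h
    exact hAjk (funext h)
  have hlamex : ∃ lam : (Fin 3 → ℕ) → ℕ, (∀ x y, lam (x + y) = lam x + lam y) ∧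
      (∀ s : Fin 3 → ℕ, s ≠ 0 → 0 < lam s) ∧
      lam (a (Fin.castLE hde j)) ≠ lam (a (Fin.castLE hde kk)) := by
    by_cases hσjk : σ (a (Fin.castLE hde j)) = σ (a (Fin.castLE hde kk))
    · refine ⟨fun v => σ v + v t0, ?_, ?_, ?_⟩
      · intro x y
        show σ (x + y) + (x + y) t0 = (σ x + x t0) + (σ y + y t0)
        rw [hσadd, Pi.add_apply]
        omega
      · intro s hs
        show 0 < σ s + s t0
        have := hσpos s hs
        omega
      · show σ (a (Fin.castLE hde j)) + a (Fin.castLE hde j) t0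
            ≠ σ (a (Fin.castLE hde kk)) + a (Fin.castLE hde kk) t0
        rw [hσjk]
        omega
    · exact ⟨σ, hσadd, hσpos, hσjk⟩
  obtain ⟨lam, hlamadd, hlampos, hlamne⟩ := hlamex
  rcases Nat.lt_or_ge (lam (a (Fin.castLE hde kk))) (lam (a (Fin.castLE hde j))) with hlt | hge
  · exact core_comb S ApE hApEfin (a (Fin.castLE hde i)) (a (Fin.castLE hde j))
      (a (Fin.castLE hde kk)) (haS _) (haS _) (haS _) hdec lam hlamadd hlampos hlt hmax
      ((MvPolynomial.aeval (fun l => AddMonoidAlgebra.single (a l) (1:k))) g) hπg hprod0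
  · have hlt : lam (a (Fin.castLE hde j)) < lam (a (Fin.castLE hde kk)) := by omega
    have hdec2 : ∀ s ∈ S, ∃ c ∈ ApE, c ∈ S ∧ ∃ α β γ : ℕ,
        s = c + α • a (Fin.castLE hde i) + β • a (Fin.castLE hde kk)
          + γ • a (Fin.castLE hde j) := by
      intro s hs
      obtain ⟨c, hcA, hcS, α, β, γ, hre⟩ := hdec s hs
      exact ⟨c, hcA, hcS, α, γ, β, by rw [hre]; abel⟩
    have hprod2 : ∀ w, (((AddMonoidAlgebra.single (a (Fin.castLE hde kk)) 1
        - AddMonoidAlgebra.single (a (Fin.castLE hde j)) 1) *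
        (MvPolynomial.aeval (fun l => AddMonoidAlgebra.single (a l) (1:k))) g
        : AddMonoidAlgebra k (Fin 3 → ℕ))).coeff w ≠ 0 →
        ∃ s ∈ S, w = a (Fin.castLE hde i) + s := by
      intro w hw
      apply hprod0 w
      intro h0
      apply hw
      rw [show (((AddMonoidAlgebra.single (a (Fin.castLE hde kk)) 1
        - AddMonoidAlgebra.single (a (Fin.castLE hde j)) 1) *
        (MvPolynomial.aeval (fun l => AddMonoidAlgebra.single (a l) (1:k))) g)
        : AddMonoidAlgebra k (Fin 3 → ℕ))
        = -(((AddMonoidAlgebra.single (a (Fin.castLE hde j)) 1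
        - AddMonoidAlgebra.single (a (Fin.castLE hde kk)) 1) *
        (MvPolynomial.aeval (fun l => AddMonoidAlgebra.single (a l) (1:k))) g)
        : AddMonoidAlgebra k (Fin 3 → ℕ)) from by rw [← neg_sub, neg_mul],
        AddMonoidAlgebra.coeff_neg, Finsupp.neg_apply, h0, neg_zero]
    exact core_comb S ApE hApEfin (a (Fin.castLE hde i)) (a (Fin.castLE hde kk))
      (a (Fin.castLE hde j)) (haS _) (haS _) (haS _) hdec2 lam hlamadd hlampos hlt hmax
      ((MvPolynomial.aeval (fun l => AddMonoidAlgebra.single (a l) (1:k))) g) hπg hprod2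
end
end

section
/- Let S be a simplicial affine semigroup in ℕ^d with extremal rays E = {a_1,...,a_d} and suppose b ∈ Ap(S, a_i) satisfies b + a_j ∉ Ap(S, a_i) and b + a_k ∉ Ap(S, a_i) for distinct indices j, k ≠ i with {a_j, a_k} ⊆ E \ {a_i}, and in fact b + c ∉ Ap(S, a_i) for every c ∈ E \ {a_i}. Then b + c ∉ Ap(S, a_i) for every c ∈ S \ Ap(S, E), and consequently Ap(S, a_i) has a ⪯_S-maximal element. -/
/-- if `b ∈ Ap(S, a_i)` satisfies `b + c ∉ Ap(S, a_i)` for every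
extremal ray `c ∈ E \ {a_i}`, then `b + c ∉ Ap(S, a_i)` for every `c ∈ S \ Ap(S, E)`,
and consequently `Ap(S, a_i)` has a `⪯_S`-maximal element. -/
theorem apery_maximal_of_step {d : ℕ} (S : AddSubmonoid (Fin d → ℕ))
    (a : Fin d → (Fin d → ℕ)) (ha : ∀ i, a i ∈ S)
    (hE : LinearIndependent ℚ (fun i : Fin d => (fun t => (a i t : ℚ))))
    (hFin : {x | x ∈ S ∧ ∀ t, ¬ ∃ s ∈ S, x = a t + s}.Finite)
    (i : Fin d) (b : Fin d → ℕ) (hb : memApery S (a i) b)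
    (hstep : ∀ j, j ≠ i → ¬ memApery S (a i) (b + a j)) :
    (∀ c ∈ S, c ∉ {x | x ∈ S ∧ ∀ t, ¬ ∃ s ∈ S, x = a t + s} →
      ¬ memApery S (a i) (b + c)) ∧
    (∃ m, memApery S (a i) m ∧
      ∀ x, memApery S (a i) x → semigroupLE S m x → x = m) := by
  have part1 : ∀ c ∈ S, c ∉ {x | x ∈ S ∧ ∀ t, ¬ ∃ s ∈ S, x = a t + s} →
      ¬ memApery S (a i) (b + c) := by
    intro c hc hcn hap
    have : ∃ t, ∃ s ∈ S, c = a t + s := by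
      by_contra h
      push_neg at h
      exact hcn ⟨hc, fun t hex => by obtain ⟨s, hs, he⟩ := hex; exact h t s hs he⟩
    obtain ⟨t, s, hs, rfl⟩ := this
    by_cases hti : t = i
    · subst hti
      exact hap.2 ⟨b + s, S.add_mem hb.1 hs, by
        rw [add_left_comm]⟩
    · have h2 := hstep t hti
      have hbt : b + a t ∈ S := S.add_mem hb.1 (ha t)
      have : ∃ s' ∈ S, b + a t = a i + s' := by
        by_contra h
        exact h2 ⟨hbt, h⟩
      obtain ⟨s', hs', heq⟩ := this
      exact hap.2 ⟨s' + s, S.add_mem hs' hs, by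
        rw [← add_assoc, heq, add_assoc]⟩
  refine ⟨part1, ?_⟩
  set T : Set (Fin d → ℕ) := {x | memApery S (a i) x ∧ semigroupLE S b x} with hT
  have hTfin : T.Finite := by
    apply Set.Finite.subset (hFin.image (fun s => b + s))
    rintro x ⟨hxap, s, hs, rfl⟩
    refine ⟨s, ?_, rfl⟩
    by_contra hsn
    exact part1 s hs hsn hxap
  have hbT : b ∈ T := ⟨hb, 0, S.zero_mem, by simp⟩
  obtain ⟨m, hmT, hmax⟩ : ∃ m ∈ T, ∀ x ∈ T, (∑ t, m t) ≤ ∑ t, x t → (∑ t, m t) = ∑ t, x t := by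
    obtain ⟨m, hmT, hmax⟩ := hTfin.exists_maximalFor (fun x => ∑ t, x t) T ⟨b, hbT⟩
    exact ⟨m, hmT, fun x hx h => le_antisymm h (hmax hx h)⟩
  refine ⟨m, hmT.1, ?_⟩
  rintro x hxap ⟨s, hs, rfl⟩
  obtain ⟨s', hs', heq⟩ := hmT.2
  have hxT : m + s ∈ T := ⟨hxap, s' + s, S.add_mem hs' hs, by rw [← add_assoc, ← heq]⟩
  have hle : (∑ t, m t) ≤ ∑ t, (m + s) t := by
    simp only [Pi.add_apply, Finset.sum_add_distrib]
    exact Nat.le_add_right _ _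
  have := hmax (m + s) hxT hle
  have hs0 : s = 0 := by
    funext t
    simp only [Pi.add_apply, Finset.sum_add_distrib] at this
    have : ∑ t, s t = 0 := by omega
    have := Finset.sum_eq_zero_iff.mp this
    exact this t (Finset.mem_univ t)
  rw [hs0, add_zero]
end
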